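/- Let A be an n × m real matrix with distinct columns, let F be a face of the Newton polytope P = conv{a_1,...,a_m}, and let c ∈ ℝ^m. Define f(x) = Σ_{i=1}^m c_i exp(a_iᵀ x) and g(x) = Σ_{i : a_i ∈ F} c_i exp(a_iᵀ x). If inf_{x ∈ ℝ^n} g(x) < 0, then inf_{x ∈ ℝ^n} f(x) < 0. -/

import Mathlib

open scoped Classical in
theorem stmt_8 (n m : ℕ) (a : Fin m → (Fin n → ℝ)) (ha : Function.Injective a)
    (c : Fin m → ℝ) (F : Set (Fin n → ℝ))
    (hF : F = convexHull ℝ (Set.range a) ∨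
      ∃ s : Fin n → ℝ, F = {p ∈ convexHull ℝ (Set.range a) |
        ∀ q ∈ convexHull ℝ (Set.range a), ∑ j, s j * q j ≤ ∑ j, s j * p j})
    (hg : ∃ x : Fin n → ℝ,
      (∑ i, (if a i ∈ F then c i else 0) * Real.exp (∑ j, a i j * x j)) < 0) :
    ∃ x : Fin n → ℝ, (∑ i, c i * Real.exp (∑ j, a i j * x j)) < 0 := by
  have hmem : ∀ i, a i ∈ convexHull ℝ (Set.range a) :=
    fun i => subset_convexHull ℝ _ ⟨i, rfl⟩
  obtain ⟨x₀, hx₀⟩ := hg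
  rcases hF with hF | ⟨s, hF⟩
  · -- F is the whole polytope, so g = f
    refine ⟨x₀, ?_⟩
    have : ∀ i, a i ∈ F := fun i => hF ▸ hmem i
    calc (∑ i, c i * Real.exp (∑ j, a i j * x₀ j))
        = ∑ i, (if a i ∈ F then c i else 0) * Real.exp (∑ j, a i j * x₀ j) := by
          refine Finset.sum_congr rfl fun i _ => ?_
          rw [if_pos (this i)]
      _ < 0 := hx₀
  · -- proper face case
    have hm : Nonempty (Fin m) := by
      by_contra h
      simp only [not_nonempty_iff] at h
      rw [Finset.univ_eq_empty, Finset.sum_empty] at hx₀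
      exact lt_irrefl 0 hx₀
    set d : Fin m → ℝ := fun i => ∑ j, s j * a i j with hd
    set M : ℝ := Finset.univ.sup' (Finset.univ_nonempty) d with hM
    have hlin : IsLinearMap ℝ (fun q : Fin n → ℝ => ∑ j, s j * q j) := by
      constructor
      · intro x y; simp [mul_add, Finset.sum_add_distrib]
      · intro r x; simp [Finset.mul_sum, Pi.smul_apply, smul_eq_mul]; ring_nf
        exact Finset.sum_congr rfl fun j _ => by ring
    have hub : ∀ q ∈ convexHull ℝ (Set.range a), (∑ j, s j * q j) ≤ M := by
      intro q hq
      have : convexHull ℝ (Set.range a) ⊆ {w | (∑ j, s j * w j) ≤ M} := by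
        apply convexHull_min
        · rintro _ ⟨i, rfl⟩
          exact Finset.le_sup' d (Finset.mem_univ i)
        · exact convex_halfSpace_le hlin M
      exact this hq
    have hdM : ∀ i, d i ≤ M := fun i => Finset.le_sup' d (Finset.mem_univ i)
    have hiff : ∀ i, a i ∈ F ↔ d i = M := by
      intro i
      constructor
      · intro hi
        rw [hF] at hi
        obtain ⟨i₀, -, hi₀⟩ := Finset.exists_mem_eq_sup' (Finset.univ_nonempty) d
        refine le_antisymm (hdM i) ?_
        calc M = d i₀ := hi₀
          _ ≤ ∑ j, s j * a i j := hi.2 (a i₀) (hmem i₀)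
          _ = d i := rfl
      · intro hi
        rw [hF]
        exact ⟨hmem i, fun q hq => le_trans (hub q hq) (le_of_eq hi.symm)⟩
    -- the shifted function
    set E : Fin m → ℝ := fun i => Real.exp (∑ j, a i j * x₀ j) with hE
    set φ : ℝ → ℝ := fun t => ∑ i, (c i * E i) * Real.exp (t * (d i - M)) with hφ
    have hlim : Filter.Tendsto φ Filter.atTop
        (nhds (∑ i, if d i = M then c i * E i else 0)) := by
      apply tendsto_finset_sum
      intro i _
      by_cases h : d i = M
      · simp only [h, if_pos, sub_self, mul_zero, Real.exp_zero, mul_one]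
        exact tendsto_const_nhds
      · rw [if_neg h]
        have hneg : d i - M < 0 := sub_neg.mpr (lt_of_le_of_ne (hdM i) h)
        have h1 : Filter.Tendsto (fun t : ℝ => t * (d i - M)) Filter.atTop Filter.atBot :=
          Filter.Tendsto.atTop_mul_const_of_neg hneg Filter.tendsto_id
        have h2 : Filter.Tendsto (fun t : ℝ => Real.exp (t * (d i - M)))
            Filter.atTop (nhds 0) := Real.tendsto_exp_atBot.comp h1
        have := h2.const_mul (c i * E i)
        simpa using this
    have hval : (∑ i, if d i = M then c i * E i else 0)
        = ∑ i, (if a i ∈ F then c i else 0) * E i := by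
      refine Finset.sum_congr rfl fun i _ => ?_
      rw [ite_mul, zero_mul]
      congr 1
      simp [hiff i]
    have hlt : (∑ i, if d i = M then c i * E i else 0) < 0 := by
      rw [hval]; exact hx₀
    have hev : ∀ᶠ t in Filter.atTop, φ t < 0 :=
      hlim.eventually_lt_const hlt
    obtain ⟨t, ht⟩ := hev.exists
    refine ⟨fun j => x₀ j + t * s j, ?_⟩
    have hterm : ∀ i, c i * Real.exp (∑ j, a i j * (x₀ j + t * s j))
        = Real.exp (t * M) * ((c i * E i) * Real.exp (t * (d i - M))) := by
      intro i
      have h1 : (∑ j, a i j * (x₀ j + t * s j)) = (∑ j, a i j * x₀ j) + t * d i := by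
        rw [hd, Finset.mul_sum, ← Finset.sum_add_distrib]
        exact Finset.sum_congr rfl fun j _ => by ring
      rw [h1, Real.exp_add, hE, mul_sub, Real.exp_sub]
      field_simp
    calc (∑ i, c i * Real.exp (∑ j, a i j * (x₀ j + t * s j)))
        = Real.exp (t * M) * φ t := by
          rw [hφ, Finset.mul_sum]
          exact Finset.sum_congr rfl fun i _ => hterm i
      _ < 0 := mul_neg_of_pos_of_neg (Real.exp_pos _) ht
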